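/- Let λ be a real number with λ < −1 or λ > 1/3. Then the characteristic polynomial r_λ satisfies the root condition: every complex root z of r_λ has |z| ≤ 1, the only root of modulus 1 is z = 1, and z = 1 is a simple root of r_λ. -/

import Mathlib

/-- The ZeroSNet characteristic polynomial over ℂ (real parameter λ):
`r_λ(ρ) = ρ³ − ((3λ+3)/(4λ))ρ² + (1/λ)ρ − (1+λ)/(4λ)`. -/
noncomputable def zerosCharPoly (l : ℝ) (ρ : ℂ) : ℂ :=
  ρ ^ 3 - ((3 * (l : ℂ) + 3) / (4 * (l : ℂ))) * ρ ^ 2 + (1 / (l : ℂ)) * ρ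
    - (1 + (l : ℂ)) / (4 * (l : ℂ))

/-- Roots of the quadratic factor `4λρ² + (λ−3)ρ + (1+λ)` have modulus `< 1` in the
zero-stability region. -/
lemma zerosnet_quad_bound (l : ℝ) (hl : l < -1 ∨ 1 / 3 < l) (z : ℂ)
    (heq : 4 * (l:ℂ) * z^2 + ((l:ℂ) - 3) * z + (1 + (l:ℂ)) = 0) :
    ‖z‖ < 1 := by
  set x := z.re with hx
  set y := z.im with hy
  have hre := congrArg Complex.re heq
  have him := congrArg Complex.im heq
  simp [Complex.add_re, Complex.mul_re, Complex.mul_im, pow_two] at hre him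
  have h1 : 4 * l * (x^2 - y^2) + (l - 3) * x + (1 + l) = 0 := by nlinarith [hre]
  have h2 : y * (8 * l * x + (l - 3)) = 0 := by nlinarith [him]
  have hkey : x^2 + y^2 < 1 := by
    rcases mul_eq_zero.mp h2 with hy0 | hxv
    · -- real root: y = 0
      have hq : 4 * l * x^2 + (l - 3) * x + (1 + l) = 0 := by
        rw [hy0] at h1; nlinarith [h1]
      rw [hy0]
      have hx2 : x^2 < 1 := by
        by_contra hcon
        push_neg at hcon
        have hcase : 1 ≤ x ∨ x ≤ -1 := by
          rcases le_total 0 x with h0 | h0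
          · left; nlinarith
          · right; nlinarith
        rcases hl with h | h
        · rcases hcase with hc | hc
          · have hfac : (x - 1) * (4*l*x + 5*l - 3) ≤ 0 :=
              mul_nonpos_of_nonneg_of_nonpos (by linarith) (by nlinarith)
            nlinarith [hq, hfac]
          · have hfac : (x + 1) * (4*l*x - 3*l - 3) ≤ 0 :=
              mul_nonpos_of_nonpos_of_nonneg (by linarith) (by nlinarith)
            nlinarith [hq, hfac]
        · rcases hcase with hc | hc
          · have hfac : 0 ≤ (x - 1) * (4*l*x + 5*l - 3) :=
              mul_nonneg (by linarith) (by nlinarith)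
            nlinarith [hq, hfac]
          · have hfac : 0 ≤ (x + 1) * (4*l*x - 3*l - 3) := by
              nlinarith [mul_nonneg (by linarith : (0:ℝ) ≤ -(x + 1))
                (by nlinarith : (0:ℝ) ≤ -(4*l*x - 3*l - 3))]
            nlinarith [hq, hfac]
      nlinarith [hx2]
    · -- complex conjugate pair: the modulus squared equals `(1+λ)/(4λ) < 1`
      have ha : 16 * l^2 * (x^2 + y^2) = 4*l*(1+l) := by
        linear_combination (-(4*l)) * h1 + (4*l*x) * hxv
      have hpos : 0 < 4*l*(3*l - 1) := by
        rcases hl with h | h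
        · exact mul_pos_of_neg_of_neg (by linarith) (by linarith)
        · exact mul_pos (by linarith) (by linarith)
      have h16 : 0 < 16 * l^2 := by rcases hl with h | h <;> nlinarith
      nlinarith [ha, hpos, h16]
  have habs : ‖z‖^2 = x^2 + y^2 := by
    rw [Complex.sq_norm, Complex.normSq_apply]; ring
  nlinarith [norm_nonneg z, habs, hkey]

/-- Factorization of the characteristic polynomial: a root is `1` or a root of the
quadratic factor. -/
lemma zerosnet_factor (l : ℝ) (hl0 : (l:ℂ) ≠ 0) (z : ℂ) (hz : zerosCharPoly l z = 0) :
    z = 1 ∨ 4 * (l:ℂ) * z^2 + ((l:ℂ) - 3) * z + (1 + (l:ℂ)) = 0 := by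
  have key : (z - 1) * (4 * (l:ℂ) * z^2 + ((l:ℂ) - 3) * z + (1 + (l:ℂ))) = 0 := by
    have h4 : (4 : ℂ) * l ≠ 0 := by
      intro h; apply hl0; simpa using h
    calc (z - 1) * (4 * (l:ℂ) * z^2 + ((l:ℂ) - 3) * z + (1 + (l:ℂ)))
        = 4 * (l:ℂ) * zerosCharPoly l z := by
          unfold zerosCharPoly; field_simp; ring
      _ = 0 := by rw [hz]; ring
  rcases mul_eq_zero.mp key with h | h
  · left; exact sub_eq_zero.mp h
  · right; exact h

/-- For λ in the zero-stability region (`λ < −1` or `λ > 1/3`), the ZeroSNet characteristic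
polynomial `r_λ` satisfies the root condition: every complex root has modulus at most 1,
the only root of modulus 1 is `1`, and `1` is a simple root (the derivative of `r_λ` does
not vanish there). -/
theorem zerosnet_root_condition (l : ℝ) (hl : l < -1 ∨ 1 / 3 < l) :
    (∀ z : ℂ, zerosCharPoly l z = 0 → ‖z‖ ≤ 1) ∧
    (∀ z : ℂ, zerosCharPoly l z = 0 → ‖z‖ = 1 → z = 1) ∧
    zerosCharPoly l 1 = 0 ∧ deriv (zerosCharPoly l) 1 ≠ 0 := by
  have hlne : l ≠ 0 := by rcases hl with h | h <;> intro h0 <;> rw [h0] at h <;> norm_num at h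
  have hl0 : (l:ℂ) ≠ 0 := by exact_mod_cast hlne
  have hl3 : (3:ℝ) * l - 1 ≠ 0 := by
    rcases hl with h | h <;> intro h0 <;> nlinarith
  refine ⟨?_, ?_, ?_, ?_⟩
  · intro z hz
    rcases zerosnet_factor l hl0 z hz with h | h
    · simp [h]
    · exact le_of_lt (zerosnet_quad_bound l hl z h)
  · intro z hz habs
    rcases zerosnet_factor l hl0 z hz with h | h
    · exact h
    · exact absurd habs (ne_of_lt (zerosnet_quad_bound l hl z h))
  · unfold zerosCharPoly; field_simp; ring
  · have hd : HasDerivAt (zerosCharPoly l)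
        (3 * 1^2 - ((3 * (l:ℂ) + 3) / (4 * (l:ℂ))) * (2 * 1) + (1 / (l:ℂ))) 1 := by
      unfold zerosCharPoly
      have h1 : HasDerivAt (fun ρ : ℂ => ρ ^ 3) (3 * 1^2) 1 := by
        simpa using hasDerivAt_pow 3 (1:ℂ)
      have h2 : HasDerivAt (fun ρ : ℂ => ((3 * (l:ℂ) + 3) / (4 * (l:ℂ))) * ρ ^ 2)
          (((3 * (l:ℂ) + 3) / (4 * (l:ℂ))) * (2 * 1)) 1 := by
        simpa using (hasDerivAt_pow 2 (1:ℂ)).const_mul ((3 * (l:ℂ) + 3) / (4 * (l:ℂ)))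
      have h3 : HasDerivAt (fun ρ : ℂ => (1 / (l:ℂ)) * ρ) (1 / (l:ℂ)) 1 := by
        simpa using (hasDerivAt_id (1:ℂ)).const_mul (1 / (l:ℂ))
      simpa using ((h1.sub h2).add h3).sub_const ((1 + (l:ℂ)) / (4 * (l:ℂ)))
    rw [hd.deriv]
    intro h
    apply hl3
    have h4 : (4 : ℂ) * l ≠ 0 := by intro h'; apply hl0; simpa using h'
    field_simp at h
    have hml : (l:ℂ) * (6 * l - 2) = 0 := by linear_combination (l:ℂ) * h
    have : (3:ℂ) * l - 1 = 0 := by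
      rcases mul_eq_zero.mp hml with h' | h'
      · exact absurd h' hl0
      · linear_combination h' / 2
    have := congrArg Complex.re this
    simpa using this
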